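/- (Spinorial Hamiltonian constraint on a triangular face.) Let u₁, u₆, ũ₂ ∈ SU(2) satisfy the flatness constraint ũ₂·u₁⁻¹·u₆⁻¹ = 𝟙. Let τ₁, t̃₁ ∈ ℂ² be nonzero vectors with u₁ = (|τ₁⟩[t̃₁| − |τ₁]⟨t̃₁|)/N₁ where N₁ = √(⟨τ₁|τ₁⟩·⟨t̃₁|t̃₁⟩). Let t₂, τ̃₂ ∈ ℂ² satisfy the parallel transport relation ⟨t₂|·ũ₂ = [τ̃₂| (as row vectors), and let τ₆, t̃₆ ∈ ℂ² satisfy u₆⁻¹·|τ₆] = −|t̃₆⟩. Then ⟨t₂|τ₆] = (1/N₁)·([t̃₆|τ₁⟩·[t̃₁|τ̃₂⟩ − [t̃₆|τ₁]·⟨t̃₁|τ̃₂⟩); that is, the holonomy variables drop out and the flatness constraint becomes a polynomial relation among the quadratic spinor invariants on the three corners of the face. -/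

import Mathlib

open Matrix

noncomputable section

/-- `⟨x|`: the conjugate-transpose row vector `(x̄₀, x̄₁)`. -/
def braC (x : Fin 2 → ℂ) : Fin 2 → ℂ := fun i => star (x i)

/-- `|x]`: the column vector `(−x̄₁, x̄₀)`. -/
def ketS (x : Fin 2 → ℂ) : Fin 2 → ℂ := ![-(star (x 1)), star (x 0)]

/-- `[x|`: the row vector `(−x₁, x₀)`. -/
def braS (x : Fin 2 → ℂ) : Fin 2 → ℂ := ![-(x 1), x 0]

/-- `⟨x|y⟩ = x̄₀y₀ + x̄₁y₁`. -/
def bk (x y : Fin 2 → ℂ) : ℂ := star (x 0) * y 0 + star (x 1) * y 1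

/-- `[x|y⟩ = x₀y₁ − x₁y₀`. -/
def sk (x y : Fin 2 → ℂ) : ℂ := x 0 * y 1 - x 1 * y 0

/-- `⟨x|y] = x̄₁ȳ₀ − x̄₀ȳ₁`. -/
def bs (x y : Fin 2 → ℂ) : ℂ := star (x 1) * star (y 0) - star (x 0) * star (y 1)

/-- `[x|y] = x₀ȳ₀ + x₁ȳ₁`. -/
def ss (x y : Fin 2 → ℂ) : ℂ := x 0 * star (y 0) + x 1 * star (y 1)

end

/-- Spinorial Hamiltonian constraint on a triangular face: under the flatness
constraint `ũ₂·u₁⁻¹·u₆⁻¹ = 𝟙`, the matrix element `⟨t₂|τ₆]` equals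
`(1/N₁)·([t̃₆|τ₁⟩·[t̃₁|τ̃₂⟩ − [t̃₆|τ₁]·⟨t̃₁|τ̃₂⟩)`: the holonomies drop out and
flatness becomes a polynomial relation among the quadratic spinor invariants. -/
theorem triangular_face_hamiltonian
    (u₁ u₆ ut₂ : Matrix (Fin 2) (Fin 2) ℂ)
    (hu₁ : u₁ ∈ Matrix.unitaryGroup (Fin 2) ℂ ∧ u₁.det = 1)
    (hu₆ : u₆ ∈ Matrix.unitaryGroup (Fin 2) ℂ ∧ u₆.det = 1)
    (hut₂ : ut₂ ∈ Matrix.unitaryGroup (Fin 2) ℂ ∧ ut₂.det = 1)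
    (hflat : ut₂ * u₁⁻¹ * u₆⁻¹ = 1)
    (τ₁ tt₁ : Fin 2 → ℂ) (hτ₁ : τ₁ ≠ 0) (htt₁ : tt₁ ≠ 0)
    (N₁ : ℝ)
    (hN₁ : N₁ = Real.sqrt ((Complex.normSq (τ₁ 0) + Complex.normSq (τ₁ 1)) *
        (Complex.normSq (tt₁ 0) + Complex.normSq (tt₁ 1))))
    (hu₁eq : u₁ = ((N₁ : ℂ))⁻¹ •
        (Matrix.vecMulVec τ₁ (braS tt₁) - Matrix.vecMulVec (ketS τ₁) (braC tt₁)))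
    (t₂ τt₂ τ₆ tt₆ : Fin 2 → ℂ)
    (ht₂ : Matrix.vecMul (braC t₂) ut₂ = braS τt₂)
    (hτ₆ : (u₆⁻¹).mulVec (ketS τ₆) = -tt₆) :
    bs t₂ τ₆ = ((N₁ : ℂ))⁻¹ * (sk tt₆ τ₁ * sk tt₁ τt₂ - ss tt₆ τ₁ * bk tt₁ τt₂) := by
  obtain ⟨_, hd₁⟩ := hu₁
  obtain ⟨_, hd₆⟩ := hu₆
  obtain ⟨_, hdt⟩ := hut₂
  have hu₁u : IsUnit u₁.det := by rw [hd₁]; exact isUnit_one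
  have hu₆u : IsUnit u₆.det := by rw [hd₆]; exact isUnit_one
  have hutu : IsUnit ut₂.det := by rw [hdt]; exact isUnit_one
  have hut : ut₂ = u₆ * u₁ := by
    have h1 : ut₂ * u₁⁻¹ = u₆ := by
      have := Matrix.nonsing_inv_mul_cancel_right u₆ (ut₂ * u₁⁻¹) hu₆u
      calc ut₂ * u₁⁻¹ = ut₂ * u₁⁻¹ * u₆⁻¹ * u₆ :=
            (Matrix.nonsing_inv_mul_cancel_right _ _ hu₆u).symm
        _ = u₆ := by rw [hflat, one_mul]
    calc ut₂ = ut₂ * u₁⁻¹ * u₁ := (Matrix.nonsing_inv_mul_cancel_right _ _ hu₁u).symm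
      _ = u₆ * u₁ := by rw [h1]
  have key : bs t₂ τ₆ = braS τt₂ ⬝ᵥ u₁⁻¹.mulVec (-tt₆) := by
    have h1 : bs t₂ τ₆ = braC t₂ ⬝ᵥ ketS τ₆ := by
      simp [bs, braC, ketS, dotProduct, Fin.sum_univ_two]; ring
    have h2 : ketS τ₆ = ut₂.mulVec (ut₂⁻¹.mulVec (ketS τ₆)) := by
      rw [Matrix.mulVec_mulVec, Matrix.mul_nonsing_inv _ hutu, Matrix.one_mulVec]
    rw [h1, h2, Matrix.dotProduct_mulVec, ht₂, hut, Matrix.mul_inv_rev,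
      ← Matrix.mulVec_mulVec, hτ₆]
  have hinv : u₁⁻¹ = u₁.adjugate := by
    rw [Matrix.inv_def, hd₁, Ring.inverse_one, one_smul]
  rw [key, hinv, Matrix.adjugate_fin_two, hu₁eq]
  simp only [Matrix.smul_apply, Matrix.sub_apply, Matrix.vecMulVec_apply]
  simp [dotProduct, Matrix.mulVec, Matrix.vecMulVec_apply, braS, braC, ketS,
    bk, sk, ss, Fin.sum_univ_two, Matrix.smul_apply, Matrix.sub_apply, Matrix.of_apply,
    Pi.sub_apply, Pi.smul_apply]
  ring
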